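/- For every rational number q with 0 < q, if q > 1 then there exists m with q = a(2m), and if q < 1 then there exists m with q = a(2m+1). -/

import Mathlib

lemma aux_inv_spec (q : ℚ) (hq : 0 < q) : q⁻¹.num = q.den ∧ q⁻¹.den = q.num.natAbs := by
  have hn : 0 < q.num := Rat.num_pos.mpr hq
  have hd : q.num.natAbs ≠ 0 := by positivity
  have hc : (q.den : ℤ).natAbs.Coprime q.num.natAbs := by
    simpa using q.reduced.symm
  have : (Rat.mk' (q.den : ℤ) q.num.natAbs hd hc) = q⁻¹ := by
    rw [Rat.mk_eq_divInt]
    show _ = q.inv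
    rw [show q.inv = q⁻¹ from rfl, Rat.inv_def]
    congr 1
    omega
  rw [← this]
  exact ⟨rfl, rfl⟩

lemma aux_sub_one_spec (q : ℚ) : (q - 1).num = q.num - q.den ∧ (q - 1).den = q.den := by
  have hd : q.den ≠ 0 := q.den_nz
  have hc : (q.num - q.den).natAbs.Coprime q.den := by
    have h0 : IsCoprime q.num (q.den : ℤ) := Int.isCoprime_iff_gcd_eq_one.mpr q.reduced
    have h1 : IsCoprime (q.num + (q.den:ℤ) * (-1)) (q.den : ℤ) := h0.add_mul_left_left (-1)
    have h2 : IsCoprime (q.num - (q.den:ℤ)) (q.den : ℤ) := by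
      simpa [mul_neg_one, ← sub_eq_add_neg] using h1
    have := Int.isCoprime_iff_gcd_eq_one.mp h2
    simpa [Int.gcd] using this
  have : (Rat.mk' (q.num - q.den) q.den hd hc) = q - 1 := by
    rw [Rat.mk_eq_divInt]
    have hden : (q.den:ℚ) ≠ 0 := Nat.cast_ne_zero.mpr hd
    rw [show q - 1 = ((q.num - q.den : ℤ) : ℚ) / ((q.den:ℤ) : ℚ) by
      push_cast
      rw [eq_div_iff hden, sub_mul, one_mul, Rat.mul_den_eq_num]]
    rw [Rat.divInt_eq_div]
  rw [← this]
  exact ⟨rfl, rfl⟩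

theorem stmt5 (a : ℕ → ℚ) (h1 : a 1 = 1)
    (h2 : ∀ n : ℕ, 1 ≤ n → a (2 * n) = a n + 1)
    (h3 : ∀ n : ℕ, 1 ≤ n → a (2 * n + 1) = 1 / a (2 * n)) :
    ∀ q : ℚ, 0 < q →
      (1 < q → ∃ m : ℕ, 1 ≤ m ∧ q = a (2 * m)) ∧
      (q < 1 → ∃ m : ℕ, 1 ≤ m ∧ q = a (2 * m + 1)) := by
  have key : ∀ n : ℕ, ∀ q : ℚ, 1 < q → q.num.natAbs + q.den = n →
      ∃ m : ℕ, 1 ≤ m ∧ q = a (2 * m) := by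
    intro n
    induction n using Nat.strong_induction_on with
    | _ n ih =>
      intro q hq hqn
      have hq0 : 0 < q := lt_trans one_pos hq
      have hnum : 0 < q.num := Rat.num_pos.mpr hq0
      have hdpos : 0 < q.den := q.pos
      have hdenlt : (q.den : ℤ) < q.num := by
        have h := Rat.mul_den_eq_num q
        have : (q.den : ℚ) < (q.num : ℚ) := by
          calc (q.den : ℚ) = 1 * q.den := (one_mul _).symm
          _ < q * q.den := by
              apply mul_lt_mul_of_pos_right hq
              exact_mod_cast hdpos
          _ = q.num := h
        exact_mod_cast this
      obtain ⟨hsn, hsd⟩ := aux_sub_one_spec q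
      set r := q - 1 with hr
      have hr0 : 0 < r := sub_pos.mpr hq
      have hrnum : 0 < r.num := Rat.num_pos.mpr hr0
      rcases lt_trichotomy r 1 with hlt | heq | hgt
      · -- 0 < r < 1, recurse on r⁻¹
        have hri : 1 < r⁻¹ := one_lt_inv_iff₀.mpr ⟨hr0, hlt⟩
        obtain ⟨hin, hid⟩ := aux_inv_spec r hr0
        have hmeas : r⁻¹.num.natAbs + r⁻¹.den < n := by
          rw [hin, hid, hsn, hsd]
          omega
        obtain ⟨m, hm1, hm2⟩ := ih _ hmeas r⁻¹ hri rfl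
        refine ⟨2 * m + 1, by omega, ?_⟩
        rw [h2 (2 * m + 1) (by omega), h3 m hm1, ← hm2, one_div, inv_inv, hr]
        ring
      · -- r = 1 : q = 2
        refine ⟨1, le_rfl, ?_⟩
        rw [h2 1 le_rfl, h1]
        have : q - 1 = 1 := heq
        linarith
      · -- r > 1
        have hmeas : r.num.natAbs + r.den < n := by
          rw [hsn, hsd]
          omega
        obtain ⟨m, hm1, hm2⟩ := ih _ hmeas r hgt rfl
        refine ⟨2 * m, by omega, ?_⟩
        rw [h2 (2 * m) (by omega), ← hm2, hr]
        ring
  intro q hq0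
  constructor
  · intro hq1
    exact key _ q hq1 rfl
  · intro hq1
    have hri : 1 < q⁻¹ := one_lt_inv_iff₀.mpr ⟨hq0, hq1⟩
    obtain ⟨m, hm1, hm2⟩ := key _ q⁻¹ hri rfl
    exact ⟨m, hm1, by rw [h3 m hm1, ← hm2, one_div, inv_inv]⟩
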